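/- The category AlgKan has all small limits and all filtered colimits, and these are computed on underlying simplicial sets: the forgetful functor U_A : AlgKan → sSet creates (in particular preserves) all small limits and all filtered colimits. -/

import Mathlib

/-!
Common definitions for formalizing "Algebraic models for higher categories"
(T. Nikolaus, arXiv:1003.1342): algebraic Kan complexes, algebraic
quasi-categories, model structures, Quillen equivalences, local presentability,
anodyne maps, the fundamental ∞-groupoid and the reduced geometric realization.
-/

universe w₂ w v₂ v u₂ u

open CategoryTheory CategoryTheory.Limits Simplicial SSet

namespace AlgebraicModels

/-- The morphisms having the left lifting property against every morphism in `P`. -/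
def llp {C : Type u} [Category.{v} C] (P : MorphismProperty C) : MorphismProperty C :=
  fun _ _ f => ∀ ⦃X Y : C⦄ (g : X ⟶ Y), P g → HasLiftingProperty f g

/-- The morphisms having the right lifting property against every morphism in `P`. -/
def rlp {C : Type u} [Category.{v} C] (P : MorphismProperty C) : MorphismProperty C :=
  fun _ _ f => ∀ ⦃X Y : C⦄ (g : X ⟶ Y), P g → HasLiftingProperty g f

/-- The horn inclusions `Λ[n, i] ⟶ Δ[n]`, `n ≥ 1`, `0 ≤ i ≤ n`. -/
inductive hornInclusions : ∀ ⦃X Y : SSet.{0}⦄, (X ⟶ Y) → Prop where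
  | mk (n : ℕ) (hn : 1 ≤ n) (i : Fin (n + 1)) : hornInclusions (Λ[n, i].ι)

/-- The inner horn inclusions `Λ[n, i] ⟶ Δ[n]`, `0 < i < n` (hence `n ≥ 2`). -/
inductive innerHornInclusions : ∀ ⦃X Y : SSet.{0}⦄, (X ⟶ Y) → Prop where
  | mk (n : ℕ) (i : Fin (n + 1)) (h0 : 0 < i.val) (hn : i.val < n) :
      innerHornInclusions (Λ[n, i].ι)

/-- The boundary inclusions `∂Δ[n] ⟶ Δ[n]`. -/
inductive boundaryInclusions : ∀ ⦃X Y : SSet.{0}⦄, (X ⟶ Y) → Prop where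
  | mk (n : ℕ) : boundaryInclusions (∂Δ[n].ι)

/-- Anodyne maps: the weakly saturated class generated by the horn inclusions,
characterized (via the small object argument) as the maps having the left lifting
property against every map with the right lifting property against all horn
inclusions; these are the trivial cofibrations of the Kan–Quillen model structure. -/
def anodyne : MorphismProperty SSet.{0} := llp (rlp (fun _ _ f => hornInclusions f))

/-- Inner anodyne maps: the weakly saturated class generated by the inner horn
inclusions. -/
def innerAnodyne : MorphismProperty SSet.{0} :=
  llp (rlp (fun _ _ f => innerHornInclusions f))

/-- Kan fibrations: right lifting property against all horn inclusions. -/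
def kanFibration : MorphismProperty SSet.{0} := rlp (fun _ _ f => hornInclusions f)

/-- Trivial Kan fibrations: right lifting property against all boundary inclusions. -/
def trivialKanFibration : MorphismProperty SSet.{0} :=
  rlp (fun _ _ f => boundaryInclusions f)

/-- Weak homotopy equivalences of simplicial sets, characterized as the maps
factoring as an anodyne map followed by a trivial Kan fibration (this is exactly the
class of weak equivalences of the Kan–Quillen model structure on `SSet`). -/
def weakHomotopyEquiv : MorphismProperty SSet.{0} := fun X Y f =>
  ∃ (Z : SSet.{0}) (i : X ⟶ Z) (p : Z ⟶ Y), anodyne i ∧ trivialKanFibration p ∧ i ≫ p = f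

/-- An algebraic Kan complex: a simplicial set with a distinguished filler for every
horn `Λ[n, i] ⟶ X`, `n ≥ 1`, `0 ≤ i ≤ n`. -/
structure AlgKan : Type 1 where
  carrier : SSet.{0}
  filler : ∀ ⦃n : ℕ⦄ (i : Fin (n + 1)), 1 ≤ n → ((Λ[n, i] : SSet) ⟶ carrier) → (Δ[n] ⟶ carrier)
  filler_spec : ∀ ⦃n : ℕ⦄ (i : Fin (n + 1)) (hn : 1 ≤ n) (h : (Λ[n, i] : SSet) ⟶ carrier),
    Λ[n, i].ι ≫ filler i hn h = h

namespace AlgKan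

/-- Morphisms of algebraic Kan complexes: simplicial maps preserving the
distinguished fillers. -/
@[ext]
structure Hom (X Y : AlgKan) where
  map : X.carrier ⟶ Y.carrier
  preserves : ∀ ⦃n : ℕ⦄ (i : Fin (n + 1)) (hn : 1 ≤ n) (h : (Λ[n, i] : SSet) ⟶ X.carrier),
    X.filler i hn h ≫ map = Y.filler i hn (h ≫ map)

instance : Category.{0} AlgKan where
  Hom := Hom
  id X := ⟨𝟙 X.carrier, fun n i hn h => by simp⟩
  comp {X Y Z} f g := ⟨f.map ≫ g.map, fun n i hn h => by
    rw [← Category.assoc, f.preserves, g.preserves, Category.assoc]⟩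
  id_comp f := Hom.ext (Category.id_comp f.map)
  comp_id f := Hom.ext (Category.comp_id f.map)
  assoc f g h := Hom.ext (Category.assoc f.map g.map h.map)

@[simp] lemma id_map (X : AlgKan) : Hom.map (𝟙 X) = 𝟙 X.carrier := rfl

@[simp] lemma comp_map {X Y Z : AlgKan} (f : X ⟶ Y) (g : Y ⟶ Z) :
    Hom.map (f ≫ g) = f.map ≫ g.map := rfl

end AlgKan

/-- The forgetful functor from algebraic Kan complexes to simplicial sets. -/
def UA : AlgKan ⥤ SSet.{0} where
  obj X := X.carrier
  map f := f.map

/-- An algebraic quasi-category: a simplicial set with a distinguished filler for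
every inner horn `Λ[n, i] ⟶ X`, `0 < i < n`. -/
structure AlgQ : Type 1 where
  carrier : SSet.{0}
  filler : ∀ ⦃n : ℕ⦄ (i : Fin (n + 1)), 0 < i.val → i.val < n →
    ((Λ[n, i] : SSet) ⟶ carrier) → (Δ[n] ⟶ carrier)
  filler_spec : ∀ ⦃n : ℕ⦄ (i : Fin (n + 1)) (h0 : 0 < i.val) (hn : i.val < n)
    (h : (Λ[n, i] : SSet) ⟶ carrier), Λ[n, i].ι ≫ filler i h0 hn h = h

namespace AlgQ

/-- Morphisms of algebraic quasi-categories: simplicial maps preserving the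
distinguished fillers. -/
@[ext]
structure Hom (X Y : AlgQ) where
  map : X.carrier ⟶ Y.carrier
  preserves : ∀ ⦃n : ℕ⦄ (i : Fin (n + 1)) (h0 : 0 < i.val) (hn : i.val < n)
    (h : (Λ[n, i] : SSet) ⟶ X.carrier),
    X.filler i h0 hn h ≫ map = Y.filler i h0 hn (h ≫ map)

instance : Category.{0} AlgQ where
  Hom := Hom
  id X := ⟨𝟙 X.carrier, fun n i h0 hn h => by simp⟩
  comp {X Y Z} f g := ⟨f.map ≫ g.map, fun n i h0 hn h => by
    rw [← Category.assoc, f.preserves, g.preserves, Category.assoc]⟩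
  id_comp f := Hom.ext (Category.id_comp f.map)
  comp_id f := Hom.ext (Category.comp_id f.map)
  assoc f g h := Hom.ext (Category.assoc f.map g.map h.map)

@[simp] lemma id_map (X : AlgQ) : Hom.map (𝟙 X) = 𝟙 X.carrier := rfl

@[simp] lemma comp_map {X Y Z : AlgQ} (f : X ⟶ Y) (g : Y ⟶ Z) :
    Hom.map (f ≫ g) = f.map ≫ g.map := rfl

end AlgQ

/-- The forgetful functor from algebraic quasi-categories to simplicial sets. -/
def UQ : AlgQ ⥤ SSet.{0} where
  obj X := X.carrier
  map f := f.map

/-- A (closed) model structure on a category: classes of weak equivalences,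
cofibrations and fibrations on a complete and cocomplete category, satisfying
Quillen's axioms (two-out-of-three, closure under retracts, the lifting axioms
and the factorization axioms). -/
structure ModelStructure (C : Type u) [Category.{v} C] where
  weq : MorphismProperty C
  cof : MorphismProperty C
  fib : MorphismProperty C
  hasLimits : HasLimitsOfSize.{v, v} C
  hasColimits : HasColimitsOfSize.{v, v} C
  weq_comp : ∀ ⦃X Y Z : C⦄ (f : X ⟶ Y) (g : Y ⟶ Z), weq f → weq g → weq (f ≫ g)
  weq_of_comp_left : ∀ ⦃X Y Z : C⦄ (f : X ⟶ Y) (g : Y ⟶ Z), weq f → weq (f ≫ g) → weq g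
  weq_of_comp_right : ∀ ⦃X Y Z : C⦄ (f : X ⟶ Y) (g : Y ⟶ Z), weq g → weq (f ≫ g) → weq f
  weq_retract : ∀ ⦃X Y A B : C⦄ (f : X ⟶ Y) (g : A ⟶ B)
    (i : Arrow.mk f ⟶ Arrow.mk g) (r : Arrow.mk g ⟶ Arrow.mk f),
    i ≫ r = 𝟙 (Arrow.mk f) → weq g → weq f
  cof_retract : ∀ ⦃X Y A B : C⦄ (f : X ⟶ Y) (g : A ⟶ B)
    (i : Arrow.mk f ⟶ Arrow.mk g) (r : Arrow.mk g ⟶ Arrow.mk f),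
    i ≫ r = 𝟙 (Arrow.mk f) → cof g → cof f
  fib_retract : ∀ ⦃X Y A B : C⦄ (f : X ⟶ Y) (g : A ⟶ B)
    (i : Arrow.mk f ⟶ Arrow.mk g) (r : Arrow.mk g ⟶ Arrow.mk f),
    i ≫ r = 𝟙 (Arrow.mk f) → fib g → fib f
  lifting_trivCof_fib : ∀ ⦃A B X Y : C⦄ (i : A ⟶ B) (p : X ⟶ Y),
    cof i → weq i → fib p → HasLiftingProperty i p
  lifting_cof_trivFib : ∀ ⦃A B X Y : C⦄ (i : A ⟶ B) (p : X ⟶ Y),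
    cof i → fib p → weq p → HasLiftingProperty i p
  factor_trivCof_fib : ∀ ⦃X Y : C⦄ (f : X ⟶ Y), ∃ (Z : C) (i : X ⟶ Z) (p : Z ⟶ Y),
    cof i ∧ weq i ∧ fib p ∧ i ≫ p = f
  factor_cof_trivFib : ∀ ⦃X Y : C⦄ (f : X ⟶ Y), ∃ (Z : C) (i : X ⟶ Z) (p : Z ⟶ Y),
    cof i ∧ fib p ∧ weq p ∧ i ≫ p = f

namespace ModelStructure

variable {C : Type u} [Category.{v} C] (M : ModelStructure C)

/-- The trivial cofibrations of a model structure. -/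
def trivCof : MorphismProperty C := fun _ _ f => M.cof f ∧ M.weq f

/-- The trivial fibrations of a model structure. -/
def trivFib : MorphismProperty C := fun _ _ f => M.fib f ∧ M.weq f

/-- An object is fibrant iff every morphism from the source of a trivial cofibration
to it extends along the trivial cofibration (equivalently, the map to the terminal
object is a fibration). -/
def IsFibrant (X : C) : Prop :=
  ∀ ⦃A B : C⦄ (i : A ⟶ B), M.cof i → M.weq i → ∀ u : A ⟶ X, ∃ v : B ⟶ X, i ≫ v = u

/-- An object is cofibrant iff every morphism from it lifts through any trivial
fibration (equivalently, the map from the initial object is a cofibration). -/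
def IsCofibrant (X : C) : Prop :=
  ∀ ⦃E B : C⦄ (p : E ⟶ B), M.fib p → M.weq p → ∀ u : X ⟶ B, ∃ v : X ⟶ E, v ≫ p = u

/-- A model structure is cofibrantly generated by a class `I` of generating
cofibrations and a class `J` of generating trivial cofibrations if the cofibrations
are exactly `llp (rlp I)` and the trivial cofibrations are exactly `llp (rlp J)`. -/
def IsCofibrantlyGenerated (I J : MorphismProperty C) : Prop :=
  M.cof = llp (rlp I) ∧ M.trivCof = llp (rlp J)

/-- Right properness: the pullback of a weak equivalence along a fibration is a weak
equivalence. -/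
def RightProper : Prop :=
  ∀ ⦃X Y Z : C⦄ (f : X ⟶ Z) (g : Y ⟶ Z) (c : PullbackCone f g),
    IsLimit c → M.fib f → M.weq g → M.weq c.fst

end ModelStructure

/-- A Quillen adjunction, expressed through its left adjoint: the left adjoint
preserves cofibrations and trivial cofibrations. -/
def IsQuillenAdjunction {C : Type u} [Category.{v} C] {D : Type u₂} [Category.{v₂} D]
    (MC : ModelStructure C) (MD : ModelStructure D) (F : C ⥤ D) : Prop :=
  (∀ ⦃X Y : C⦄ (f : X ⟶ Y), MC.cof f → MD.cof (F.map f)) ∧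
  (∀ ⦃X Y : C⦄ (f : X ⟶ Y), MC.cof f → MC.weq f → MD.cof (F.map f) ∧ MD.weq (F.map f))

/-- A Quillen equivalence: a Quillen adjunction such that for every cofibrant `X` and
every fibrant `Y`, a map `F.obj X ⟶ Y` is a weak equivalence iff its adjunct
`X ⟶ G.obj Y` is a weak equivalence. -/
def IsQuillenEquivalence {C : Type u} [Category.{v} C] {D : Type u₂} [Category.{v₂} D]
    (MC : ModelStructure C) (MD : ModelStructure D)
    (F : C ⥤ D) (G : D ⥤ C) (adj : F ⊣ G) : Prop :=
  IsQuillenAdjunction MC MD F ∧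
  ∀ (X : C) (Y : D), MC.IsCofibrant X → MD.IsFibrant Y →
    ∀ f : F.obj X ⟶ Y, MD.weq f ↔ MC.weq ((adj.homEquiv X Y) f)

/-- A category is `κ`-filtered if every diagram of size `< κ` in it admits a cocone. -/
def IsCardinalFiltered (J : Type v) [Category.{v} J] (κ : Cardinal.{v}) : Prop :=
  ∀ (K : Type v) [Category.{v} K] (F : K ⥤ J),
    Cardinal.mk (Arrow K) < κ → Nonempty (Cocone F)

/-- An object `A` is `κ`-presentable (`κ`-small) if `Hom(A, -)` preserves `κ`-filtered
colimits. -/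
def IsPresentableObj {C : Type u} [Category.{v} C] (κ : Cardinal.{v}) (A : C) : Prop :=
  ∀ (J : Type v) [Category.{v} J], IsCardinalFiltered J κ →
    Nonempty (PreservesColimitsOfShape J (coyoneda.obj (Opposite.op A)))

/-- A category is locally presentable if it is cocomplete and there is a small family
of `κ`-presentable objects (for some regular cardinal `κ`) such that every object is a
`κ`-filtered colimit of objects of this family. -/
def IsLocallyPresentable (C : Type u) [Category.{v} C] : Prop :=
  HasColimitsOfSize.{v, v} C ∧
  ∃ κ : Cardinal.{v}, κ.IsRegular ∧
    ∃ (ι : Type v) (G : ι → C),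
      (∀ i, IsPresentableObj κ (G i)) ∧
      ∀ X : C, ∃ (J : Cat.{v, v}) (_ : IsCardinalFiltered J κ) (D : J ⥤ C) (c : Cocone D),
        (∀ j : J, ∃ i : ι, Nonempty (D.obj j ≅ G i)) ∧
        Nonempty (IsColimit c) ∧ Nonempty (c.pt ≅ X)

/-- The forgetful functor from algebraic Kan complexes to algebraic quasi-categories:
it forgets the distinguished fillers of the outer horns (and keeps those of the inner
horns), so that `V ⋙ UQ = UA`. -/
def V : AlgKan ⥤ AlgQ where
  obj X :=
    { carrier := X.carrier
      filler := fun n i h0 hn h => X.filler i (by omega) h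
      filler_spec := fun n i h0 hn h => X.filler_spec i (by omega) h }
  map {X Y} f :=
    { map := f.map
      preserves := fun n i h0 hn h => f.preserves i (by omega) h }
  map_id X := AlgQ.Hom.ext rfl
  map_comp f g := AlgQ.Hom.ext rfl

/-- The image `{ F.map (∂Δ[n] ⟶ Δ[n]) | n ≥ 1 }` of the boundary inclusions with
`n ≥ 1` under a functor `F : SSet ⥤ D`. -/
inductive imageBoundaryInclusions {D : Type u} [Category.{v} D] (F : SSet.{0} ⥤ D) :
    ∀ ⦃X Y : D⦄, (X ⟶ Y) → Prop where
  | mk (n : ℕ) (hn : 1 ≤ n) : imageBoundaryInclusions F (F.map (∂Δ[n].ι))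

/-- The image `{ F.map (Λ[n, i] ⟶ Δ[n]) | n ≥ 1, 0 ≤ i ≤ n }` of the horn inclusions
under a functor `F : SSet ⥤ D`. -/
inductive imageHornInclusions {D : Type u} [Category.{v} D] (F : SSet.{0} ⥤ D) :
    ∀ ⦃X Y : D⦄, (X ⟶ Y) → Prop where
  | mk (n : ℕ) (hn : 1 ≤ n) (i : Fin (n + 1)) :
      imageHornInclusions F (F.map (Λ[n, i].ι))

/-- The geometric realizations of the horn inclusions. -/
inductive topHornInclusions : ∀ ⦃X Y : TopCat.{0}⦄, (X ⟶ Y) → Prop where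
  | mk (n : ℕ) (hn : 1 ≤ n) (i : Fin (n + 1)) :
      topHornInclusions (SSet.toTop.map (Λ[n, i].ι))

/-- The geometric realizations of the boundary inclusions. -/
inductive topBoundaryInclusions : ∀ ⦃X Y : TopCat.{0}⦄, (X ⟶ Y) → Prop where
  | mk (n : ℕ) : topBoundaryInclusions (SSet.toTop.map (∂Δ[n].ι))

/-- Serre fibrations: right lifting property against the realized horn inclusions. -/
def serreFibration : MorphismProperty TopCat.{0} := rlp (fun _ _ f => topHornInclusions f)

/-- Trivial Serre fibrations. -/
def topTrivialFibration : MorphismProperty TopCat.{0} :=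
  rlp (fun _ _ f => topBoundaryInclusions f)

/-- Trivial cofibrations of the Quillen model structure on `Top`. -/
def topTrivialCofibration : MorphismProperty TopCat.{0} :=
  llp (rlp (fun _ _ f => topHornInclusions f))

/-- Weak homotopy equivalences of topological spaces, characterized as the maps
factoring as a trivial cofibration followed by a trivial fibration of the Quillen
model structure on `Top`. -/
def topWeakEquiv : MorphismProperty TopCat.{0} := fun X Y f =>
  ∃ (Z : TopCat.{0}) (i : X ⟶ Z) (p : Z ⟶ Y),
    topTrivialCofibration i ∧ topTrivialFibration p ∧ i ≫ p = f

/-- A choice, for every `n ≥ 1` and `0 ≤ i ≤ n`, of a continuous retraction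
`R(n,i) : |Δ[n]| ⟶ |Λ[n,i]|` of the inclusion of the geometric horn into the
geometric `n`-simplex. -/
structure HornRetractions where
  r : ∀ (n : ℕ) (i : Fin (n + 1)), 1 ≤ n → (SSet.toTop.obj Δ[n] ⟶ SSet.toTop.obj Λ[n, i])
  retraction : ∀ (n : ℕ) (i : Fin (n + 1)) (hn : 1 ≤ n),
    SSet.toTop.map (Λ[n, i].ι) ≫ r n i hn = 𝟙 (SSet.toTop.obj Λ[n, i])

/-- The fundamental `∞`-groupoid of a topological space `M`: the singular simplicial
set `Sing M` with the distinguished filler of a horn `h` given by the adjunct of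
`(adjunct of h) ∘ R(n,i)`. -/
noncomputable def ASingObj (R : HornRetractions) (M : TopCat.{0}) : AlgKan where
  carrier := TopCat.toSSet.obj M
  filler := fun n i hn h =>
    (sSetTopAdj.homEquiv Δ[n] M) (R.r n i hn ≫ (sSetTopAdj.homEquiv Λ[n, i] M).symm h)
  filler_spec := fun n i hn h => by
    rw [← Adjunction.homEquiv_naturality_left, ← Category.assoc, R.retraction,
      Category.id_comp, Equiv.apply_symm_apply]

/-- The fundamental `∞`-groupoid functor `ASing : Top ⥤ AlgKan` associated with the
chosen retractions. -/
noncomputable def ASing (R : HornRetractions) : TopCat.{0} ⥤ AlgKan where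
  obj M := ASingObj R M
  map {M N} f :=
    { map := TopCat.toSSet.map f
      preserves := fun n i hn h => by
        dsimp [ASingObj]
        rw [← Adjunction.homEquiv_naturality_right, Category.assoc]
        congr 2
        exact (sSetTopAdj.homEquiv_naturality_right_symm h f).symm }
  map_id M := AlgKan.Hom.ext (TopCat.toSSet.map_id M)
  map_comp f g := AlgKan.Hom.ext (TopCat.toSSet.map_comp f g)

/-- The index type of all horns of an algebraic Kan complex. -/
structure HornIndex (X : AlgKan) : Type where
  n : ℕ
  i : Fin (n + 1)
  hn : 1 ≤ n
  h : (Λ[n, i] : SSet) ⟶ X.carrier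

/-- The reduced geometric realization of an algebraic Kan complex: the coequalizer,
over all horns `h : Λ[n,i] ⟶ X`, of the realization of the distinguished filler of
`h` against the realization of `h` precomposed with the retraction `R(n,i)`. -/
noncomputable def realReducedObj (R : HornRetractions) (X : AlgKan) : TopCat.{0} :=
  coequalizer
    (Sigma.desc fun k : HornIndex X => SSet.toTop.map (X.filler k.i k.hn k.h))
    (Sigma.desc fun k : HornIndex X => R.r k.n k.i k.hn ≫ SSet.toTop.map k.h)

/-- The reduced geometric realization functor `|·|_r : AlgKan ⥤ Top`. -/
noncomputable def realReduced (R : HornRetractions) : AlgKan ⥤ TopCat.{0} where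
  obj X := realReducedObj R X
  map {X Y} f := coequalizer.desc (SSet.toTop.map f.map ≫ coequalizer.π _ _) (by
    apply Sigma.hom_ext
    intro k
    simp only [colimit.ι_desc_assoc, Cofan.mk_ι_app]
    erw [← Functor.map_comp_assoc, f.preserves k.i k.hn k.h]
    have h2 := Limits.Sigma.ι (fun k : HornIndex Y => SSet.toTop.obj Δ[k.n])
        (⟨k.n, k.i, k.hn, k.h ≫ f.map⟩ : HornIndex Y) ≫=
      coequalizer.condition
        (Sigma.desc fun k : HornIndex Y => SSet.toTop.map (Y.filler k.i k.hn k.h))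
        (Sigma.desc fun k : HornIndex Y => R.r k.n k.i k.hn ≫ SSet.toTop.map k.h)
    simp only [colimit.ι_desc_assoc, Cofan.mk_ι_app] at h2
    erw [Functor.map_comp] at h2
    simp only [Category.assoc] at h2 ⊢
    exact h2)
  map_id X := by
    dsimp only [realReducedObj]
    apply coequalizer.hom_ext
    simp [realReducedObj]
  map_comp f g := by
    dsimp only [realReducedObj]
    apply coequalizer.hom_ext
    simp [realReducedObj]
    erw [Cofork.π_ofπ, Category.assoc, coequalizer.π_desc]


section Prelim

open Opposite SimplexCategory

instance (a b : SimplexCategory) : Finite (a ⟶ b) :=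
  Finite.of_injective (fun f => (f.toOrderHom : Fin (a.len + 1) → Fin (b.len + 1)))
    (fun f g h => by
      apply SimplexCategory.Hom.ext
      exact OrderHom.ext _ _ h)

instance (n : SimplexCategory) (m : SimplexCategoryᵒᵖ) :
    Finite ((SSet.stdSimplex.{u}.obj n).obj m) :=
  Finite.of_injective ((SSet.stdSimplex.objEquiv (n := n) (m := m))) (Equiv.injective _)

instance (n : ℕ) (i : Fin (n + 1)) (m : SimplexCategoryᵒᵖ) : Finite ((Λ[n, i] : SSet).obj m) :=
  Finite.of_injective (fun α => (Λ[n, i].ι).app m α) (fun α β h => Subtype.ext h)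

/-- The underlying morphism of the simplex category of a simplex of a horn. -/
def hornMap {n : ℕ} {i : Fin (n + 1)} {m : SimplexCategoryᵒᵖ} (α : (Λ[n, i] : SSet).obj m) :
    m.unop ⟶ ⦋n⦌ :=
  SSet.stdSimplex.objEquiv ((Λ[n, i].ι).app m α)

lemma hornMap_map {n : ℕ} {i : Fin (n + 1)} {m m' : SimplexCategoryᵒᵖ} (φ : m ⟶ m')
    (α : (Λ[n, i] : SSet).obj m) : hornMap ((Λ[n, i] : SSet).map φ α) = φ.unop ≫ hornMap α :=
  rfl

end Prelim

section Prelim2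

open Opposite SimplexCategory

variable {n : ℕ} {i : Fin (n + 1)}

/-- The restriction of a horn simplex to the image of its underlying morphism. -/
noncomputable def hornRes {m : SimplexCategoryᵒᵖ} (α : (Λ[n, i] : SSet).obj m) :
    (Λ[n, i] : SSet).obj (op (image (hornMap α))) := by
  refine ⟨SSet.stdSimplex.objEquiv.symm (image.ι (hornMap α)), ?_⟩
  have h1 : Set.range (image.ι (hornMap α)).toOrderHom
      = Set.range (hornMap α).toOrderHom := by
    conv_rhs => rw [← image.fac (hornMap α)]
    rw [comp_toOrderHom, OrderHom.comp_coe]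
    exact ((epi_iff_surjective.mp inferInstance).range_comp _).symm
  show Set.range (image.ι (hornMap α)).toOrderHom ∪ {i} ≠ Set.univ
  rw [h1]
  exact α.2

lemma hornRes_len_le {m : SimplexCategoryᵒᵖ} (α : (Λ[n, i] : SSet).obj m) :
    (image (hornMap α)).len ≤ n :=
  len_le_of_mono (image.ι (hornMap α))

lemma map_hornRes {m : SimplexCategoryᵒᵖ} (α : (Λ[n, i] : SSet).obj m) :
    (Λ[n, i] : SSet).map (factorThruImage (hornMap α)).op (hornRes α) = α := by
  refine Subtype.ext ?_
  show Δ[n].map (factorThruImage (hornMap α)).op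
      (SSet.stdSimplex.objEquiv.symm (image.ι (hornMap α))) = _
  rw [SSet.stdSimplex.map_apply, Equiv.apply_symm_apply]
  show SSet.stdSimplex.objEquiv.symm
      (factorThruImage (hornMap α) ≫ image.ι (hornMap α)) = _
  rw [image.fac]
  exact Equiv.symm_apply_apply _ _

lemma horn_hom_app_eq {X : SSet.{0}} (g : (Λ[n, i] : SSet) ⟶ X) {m : SimplexCategoryᵒᵖ}
    (α : (Λ[n, i] : SSet).obj m) :
    g.app m α = X.map (factorThruImage (hornMap α)).op (g.app _ (hornRes α)) := by
  conv_lhs => rw [← map_hornRes α]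
  exact types_congr_hom (g.naturality (factorThruImage (hornMap α)).op) (hornRes α)

lemma horn_hom_ext_low {X : SSet.{0}} {g₁ g₂ : (Λ[n, i] : SSet) ⟶ X}
    (H : ∀ (b : SimplexCategory), b.len ≤ n → ∀ β : (Λ[n, i] : SSet).obj (op b),
      g₁.app (op b) β = g₂.app (op b) β) : g₁ = g₂ := by
  apply NatTrans.ext
  funext m
  refine ConcreteCategory.hom_ext _ _ fun α => ?_
  rw [horn_hom_app_eq g₁ α, horn_hom_app_eq g₂ α,
    H _ (hornRes_len_le α) (hornRes α)]

end Prelim2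

section Prelim3

open Opposite SimplexCategory

variable {n : ℕ} {i : Fin (n + 1)}

/-- The comparison of images along a map of horn simplices. -/
noncomputable def hornLift {m m' : SimplexCategoryᵒᵖ} (φ : m ⟶ m') (α : (Λ[n, i] : SSet).obj m) :
    image (hornMap ((Λ[n, i] : SSet).map φ α)) ⟶ image (hornMap α) :=
  image.lift
    { I := image (hornMap α)
      m := image.ι (hornMap α)
      e := φ.unop ≫ factorThruImage (hornMap α)
      fac := by rw [Category.assoc, image.fac]; rfl }

lemma hornLift_ι {m m' : SimplexCategoryᵒᵖ} (φ : m ⟶ m') (α : (Λ[n, i] : SSet).obj m) :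
    hornLift φ α ≫ image.ι (hornMap α) = image.ι (hornMap ((Λ[n, i] : SSet).map φ α)) :=
  image.lift_fac _

lemma factorThruImage_hornLift {m m' : SimplexCategoryᵒᵖ} (φ : m ⟶ m') (α : (Λ[n, i] : SSet).obj m) :
    factorThruImage (hornMap ((Λ[n, i] : SSet).map φ α)) ≫ hornLift φ α
      = φ.unop ≫ factorThruImage (hornMap α) := by
  rw [← cancel_mono (image.ι (hornMap α)), Category.assoc, hornLift_ι, image.fac,
    Category.assoc, image.fac]
  rfl

lemma hornRes_map {m m' : SimplexCategoryᵒᵖ} (φ : m ⟶ m') (α : (Λ[n, i] : SSet).obj m) :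
    hornRes ((Λ[n, i] : SSet).map φ α) = (Λ[n, i] : SSet).map (hornLift φ α).op (hornRes α) := by
  refine Subtype.ext ?_
  show SSet.stdSimplex.objEquiv.symm (image.ι (hornMap ((Λ[n, i] : SSet).map φ α)))
    = Δ[n].map (hornLift φ α).op (SSet.stdSimplex.objEquiv.symm (image.ι (hornMap α)))
  rw [SSet.stdSimplex.map_apply, Equiv.apply_symm_apply]
  rw [Quiver.Hom.unop_op]
  rw [hornLift_ι]

end Prelim3

section Filtered

variable {J : Type} [SmallCategory J] [IsFiltered J]

lemma exists_hom_all {I : Type} [Finite I] (j : J)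
    (P : I → ∀ ⦃j' : J⦄, (j ⟶ j') → Prop)
    (stable : ∀ (x : I) ⦃j₁ j₂ : J⦄ (f : j ⟶ j₁) (g : j₁ ⟶ j₂), P x f → P x (f ≫ g))
    (each : ∀ x : I, ∃ (j' : J) (f : j ⟶ j'), P x f) :
    ∃ (j' : J) (f : j ⟶ j'), ∀ x, P x f := by
  classical
  cases nonempty_fintype I
  choose d f hf using each
  have hj : j ∈ insert j (Finset.image d Finset.univ) := Finset.mem_insert_self _ _
  have hd : ∀ x : I, d x ∈ insert j (Finset.image d Finset.univ) := fun x =>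
    Finset.mem_insert_of_mem (Finset.mem_image_of_mem _ (Finset.mem_univ x))
  obtain ⟨S, T, hT⟩ := IsFiltered.sup_exists (insert j (Finset.image d Finset.univ))
    (Finset.image (fun x : I => ⟨j, d x, hj, hd x, f x⟩) Finset.univ)
  refine ⟨S, T hj, fun x => ?_⟩
  have h2 : f x ≫ T (hd x) = T hj :=
    hT hj (hd x) (Finset.mem_image_of_mem _ (Finset.mem_univ x))
  exact h2 ▸ stable x (f x) (T (hd x)) (hf x)

end Filtered

section Compact

open Opposite SimplexCategory

variable {J : Type} [SmallCategory J] [IsFiltered J]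
variable {F : J ⥤ SSet.{0}} {c : Cocone F}
variable {n : ℕ} {i : Fin (n + 1)}

/-- The finite index of low-dimensional horn simplices. -/
abbrev HornI (n : ℕ) (i : Fin (n + 1)) : Type :=
  Σ k : Fin (n + 1), (Λ[n, i] : SSet).obj (op ⦋(k : ℕ)⦌)

lemma horn_hom_factor (hc : IsColimit c) (h : (Λ[n, i] : SSet) ⟶ c.pt) :
    ∃ (j : J) (g : (Λ[n, i] : SSet) ⟶ F.obj j), g ≫ c.ι.app j = h := by
  classical
  have evalColim : ∀ m : SimplexCategoryᵒᵖ,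
      IsColimit (((evaluation SimplexCategoryᵒᵖ (Type 0)).obj m).mapCocone c) :=
    fun m => isColimitOfPreserves _ hc
  -- Step 1 : lift each low-dimensional simplex to some stage
  have step1 : ∀ x : HornI n i, ∃ (j : J) (y : (F.obj j).obj (op ⦋(x.1 : ℕ)⦌)),
      (c.ι.app j).app _ y = h.app _ x.2 := fun x =>
    Types.jointly_surjective_of_isColimit (evalColim (op ⦋(x.1 : ℕ)⦌)) (h.app _ x.2)
  choose j0 y0 hy0 using step1
  cases nonempty_fintype (HornI n i)
  obtain ⟨S, hS⟩ := IsFiltered.sup_objs_exists (Finset.image j0 Finset.univ)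
  have tx : ∀ x : HornI n i, j0 x ⟶ S := fun x =>
    (hS (Finset.mem_image_of_mem _ (Finset.mem_univ x))).some
  set y1 : ∀ x : HornI n i, (F.obj S).obj (op ⦋(x.1 : ℕ)⦌) :=
    fun x => (F.map (tx x)).app _ (y0 x) with hy1def
  have hy1 : ∀ x : HornI n i, (c.ι.app S).app _ (y1 x) = h.app _ x.2 := by
    intro x
    have hw := NatTrans.congr_app (c.w (tx x)) (op ⦋(x.1 : ℕ)⦌)
    have := types_congr_hom hw (y0 x)
    simp only [NatTrans.comp_app, types_comp_apply] at this ⊢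
    rw [hy1def]
    exact this.trans (hy0 x)
  -- Step 2 : make the finitely many naturality equations hold
  set Q : (Σ (x : HornI n i) (k' : Fin (n + 1)), (SimplexCategory.mk (k' : ℕ) ⟶ SimplexCategory.mk (x.1 : ℕ))) →
      ∀ ⦃j' : J⦄, (S ⟶ j') → Prop :=
    fun z _ u => (F.obj _).map z.2.2.op ((F.map u).app _ (y1 z.1))
      = (F.map u).app _ (y1 ⟨z.2.1, (Λ[n, i] : SSet).map z.2.2.op z.1.2⟩) with hQdef
  have stable : ∀ z ⦃ja jb : J⦄ (f : S ⟶ ja) (g : ja ⟶ jb), Q z f → Q z (f ≫ g) := by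
    intro z ja jb f g hfg
    simp only [hQdef] at hfg ⊢
    calc (F.obj jb).map z.2.2.op ((F.map (f ≫ g)).app _ (y1 z.1))
        = (F.obj jb).map z.2.2.op ((F.map g).app _ ((F.map f).app _ (y1 z.1))) := by
          rw [F.map_comp]; rfl
      _ = (F.map g).app _ ((F.obj ja).map z.2.2.op ((F.map f).app _ (y1 z.1))) :=
          (NatTrans.naturality_apply (F.map g) _ _).symm
      _ = (F.map g).app _ ((F.map f).app _ (y1 ⟨z.2.1, (Λ[n, i] : SSet).map z.2.2.op z.1.2⟩)) := by
          rw [hfg]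
      _ = (F.map (f ≫ g)).app _ (y1 ⟨z.2.1, (Λ[n, i] : SSet).map z.2.2.op z.1.2⟩) := by
          rw [F.map_comp]; rfl
  have each : ∀ z, ∃ (j' : J) (u : S ⟶ j'), Q z u := by
    intro z
    obtain ⟨x, k', w⟩ := z
    have e1 : (c.ι.app S).app _ ((F.obj S).map w.op (y1 x))
        = h.app _ ((Λ[n, i] : SSet).map w.op x.2) := by
      rw [NatTrans.naturality_apply (c.ι.app S) w.op (y1 x), hy1 x]
      exact (NatTrans.naturality_apply h w.op x.2).symm
    have e2 : (c.ι.app S).app _ (y1 ⟨k', (Λ[n, i] : SSet).map w.op x.2⟩)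
        = h.app _ ((Λ[n, i] : SSet).map w.op x.2) := hy1 _
    have e3 := e1.trans e2.symm
    obtain ⟨k, f, g, hfg⟩ :=
      (Types.FilteredColimit.isColimit_eq_iff _
        (evalColim (op (SimplexCategory.mk (k' : ℕ))))).mp e3
    have hfg' : (F.map f).app _ ((F.obj S).map w.op (y1 x))
        = (F.map g).app _ (y1 ⟨k', (Λ[n, i] : SSet).map w.op x.2⟩) := hfg
    refine ⟨_, f ≫ IsFiltered.coeqHom f g, ?_⟩
    simp only [hQdef]
    calc (F.obj _).map w.op ((F.map (f ≫ IsFiltered.coeqHom f g)).app _ (y1 x))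
        = (F.obj _).map w.op ((F.map (IsFiltered.coeqHom f g)).app _
            ((F.map f).app _ (y1 x))) := by rw [F.map_comp]; rfl
      _ = (F.map (IsFiltered.coeqHom f g)).app _
            ((F.obj k).map w.op ((F.map f).app _ (y1 x))) :=
          (NatTrans.naturality_apply _ _ _).symm
      _ = (F.map (IsFiltered.coeqHom f g)).app _
            ((F.map f).app _ ((F.obj S).map w.op (y1 x))) :=
          congrArg ((F.map (IsFiltered.coeqHom f g)).app _)
            (NatTrans.naturality_apply (F.map f) w.op (y1 x)).symm
      _ = (F.map (IsFiltered.coeqHom f g)).app _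
            ((F.map g).app _ (y1 ⟨k', (Λ[n, i] : SSet).map w.op x.2⟩)) := by rw [hfg']
      _ = (F.map (g ≫ IsFiltered.coeqHom f g)).app _ (y1 ⟨k', (Λ[n, i] : SSet).map w.op x.2⟩) := by
          rw [F.map_comp]; rfl
      _ = (F.map (f ≫ IsFiltered.coeqHom f g)).app _ (y1 ⟨k', (Λ[n, i] : SSet).map w.op x.2⟩) := by
          rw [← IsFiltered.coeq_condition]
  obtain ⟨jS, u, hu⟩ := exists_hom_all S Q stable each
  simp only [hQdef] at hu
  refine ⟨jS,
    { app := fun m => TypeCat.ofHom fun α => (F.obj jS).map (factorThruImage (hornMap α)).op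
        ((F.map u).app _ (y1 ⟨⟨(image (hornMap α)).len,
          Nat.lt_succ_of_le (hornRes_len_le α)⟩, hornRes α⟩))
      naturality := ?_ }, ?_⟩
  · intro m m' φ
    refine ConcreteCategory.hom_ext _ _ fun α => ?_
    have hres := hornRes_map φ α
    have hz2 := hu ⟨⟨⟨(image (hornMap α)).len, Nat.lt_succ_of_le (hornRes_len_le α)⟩,
        hornRes α⟩,
      ⟨(image (hornMap ((Λ[n, i] : SSet).map φ α))).len,
        Nat.lt_succ_of_le (hornRes_len_le ((Λ[n, i] : SSet).map φ α))⟩, hornLift φ α⟩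
    dsimp only at hz2
    show (F.obj jS).map (factorThruImage (hornMap ((Λ[n, i] : SSet).map φ α))).op
        ((F.map u).app (op (SimplexCategory.mk (image (hornMap ((Λ[n, i] : SSet).map φ α))).len))
          (y1 ⟨⟨(image (hornMap ((Λ[n, i] : SSet).map φ α))).len,
          Nat.lt_succ_of_le (hornRes_len_le ((Λ[n, i] : SSet).map φ α))⟩, hornRes ((Λ[n, i] : SSet).map φ α)⟩))
      = (F.obj jS).map φ ((F.obj jS).map (factorThruImage (hornMap α)).op
        ((F.map u).app (op (SimplexCategory.mk (image (hornMap α)).len))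
          (y1 ⟨⟨(image (hornMap α)).len,
          Nat.lt_succ_of_le (hornRes_len_le α)⟩, hornRes α⟩)))
    rw [hres, ← hz2, ← FunctorToTypes.map_comp_apply, ← FunctorToTypes.map_comp_apply,
      ← op_comp, factorThruImage_hornLift, op_comp, Quiver.Hom.op_unop]
  · apply NatTrans.ext
    funext m
    refine ConcreteCategory.hom_ext _ _ fun α => ?_
    have hz1 : (c.ι.app jS).app (op (image (hornMap α)))
        ((F.map u).app _ (y1 ⟨⟨(image (hornMap α)).len,
          Nat.lt_succ_of_le (hornRes_len_le α)⟩, hornRes α⟩))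
        = h.app (op (image (hornMap α))) (hornRes α) := by
      have hw := types_congr_hom (NatTrans.congr_app (c.w u) (op (image (hornMap α))))
        (y1 ⟨⟨(image (hornMap α)).len, Nat.lt_succ_of_le (hornRes_len_le α)⟩, hornRes α⟩)
      simp only [NatTrans.comp_app, types_comp_apply] at hw
      exact hw.trans (hy1 ⟨⟨(image (hornMap α)).len,
        Nat.lt_succ_of_le (hornRes_len_le α)⟩, hornRes α⟩)
    show (c.ι.app jS).app m ((F.obj jS).map (factorThruImage (hornMap α)).op
        ((F.map u).app _ (y1 ⟨⟨(image (hornMap α)).len,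
          Nat.lt_succ_of_le (hornRes_len_le α)⟩, hornRes α⟩))) = h.app m α
    rw [NatTrans.naturality_apply (c.ι.app jS) (factorThruImage (hornMap α)).op, hz1]
    have hnat := NatTrans.naturality_apply h (factorThruImage (hornMap α)).op (hornRes α)
    rw [map_hornRes] at hnat
    exact hnat.symm

end Compact

section Compact2

open Opposite SimplexCategory

variable {J : Type} [SmallCategory J] [IsFiltered J]
variable {F : J ⥤ SSet.{0}} {c : Cocone F}
variable {n : ℕ} {i : Fin (n + 1)}

lemma horn_hom_eq_stage (hc : IsColimit c) {j₁ j₂ : J}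
    (g₁ : (Λ[n, i] : SSet) ⟶ F.obj j₁) (g₂ : (Λ[n, i] : SSet) ⟶ F.obj j₂)
    (hg : g₁ ≫ c.ι.app j₁ = g₂ ≫ c.ι.app j₂) :
    ∃ (j : J) (u : j₁ ⟶ j) (v : j₂ ⟶ j), g₁ ≫ F.map u = g₂ ≫ F.map v := by
  classical
  have evalColim : ∀ m : SimplexCategoryᵒᵖ,
      IsColimit (((evaluation SimplexCategoryᵒᵖ (Type 0)).obj m).mapCocone c) :=
    fun m => isColimitOfPreserves _ hc
  cases nonempty_fintype (HornI n i)
  set t := IsFiltered.leftToMax j₁ j₂ with ht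
  set s := IsFiltered.rightToMax j₁ j₂ with hs
  set Q : HornI n i → ∀ ⦃j' : J⦄, (IsFiltered.max j₁ j₂ ⟶ j') → Prop :=
    fun x _ u => (F.map (t ≫ u)).app _ (g₁.app _ x.2)
      = (F.map (s ≫ u)).app _ (g₂.app _ x.2) with hQdef
  have stable : ∀ x ⦃ja jb : J⦄ (f : IsFiltered.max j₁ j₂ ⟶ ja) (g : ja ⟶ jb),
      Q x f → Q x (f ≫ g) := by
    intro x ja jb f g hx
    simp only [hQdef] at hx ⊢
    rw [← Category.assoc, ← Category.assoc, F.map_comp (t ≫ f) g, F.map_comp (s ≫ f) g,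
      NatTrans.comp_app, NatTrans.comp_app, types_comp_apply, types_comp_apply, hx]
  have each : ∀ x, ∃ (j' : J) (u : IsFiltered.max j₁ j₂ ⟶ j'), Q x u := by
    intro x
    have e1 : (c.ι.app (IsFiltered.max j₁ j₂)).app (op ⦋(x.1 : ℕ)⦌)
          ((F.map t).app _ (g₁.app _ x.2))
        = (c.ι.app (IsFiltered.max j₁ j₂)).app (op ⦋(x.1 : ℕ)⦌)
          ((F.map s).app _ (g₂.app _ x.2)) := by
      have h1 : (c.ι.app (IsFiltered.max j₁ j₂)).app (op ⦋(x.1 : ℕ)⦌)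
            ((F.map t).app _ (g₁.app _ x.2))
          = (c.ι.app j₁).app (op ⦋(x.1 : ℕ)⦌) (g₁.app _ x.2) :=
        types_congr_hom (NatTrans.congr_app (c.w t) (op ⦋(x.1 : ℕ)⦌)) (g₁.app _ x.2)
      have h2 : (c.ι.app (IsFiltered.max j₁ j₂)).app (op ⦋(x.1 : ℕ)⦌)
            ((F.map s).app _ (g₂.app _ x.2))
          = (c.ι.app j₂).app (op ⦋(x.1 : ℕ)⦌) (g₂.app _ x.2) :=
        types_congr_hom (NatTrans.congr_app (c.w s) (op ⦋(x.1 : ℕ)⦌)) (g₂.app _ x.2)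
      rw [h1, h2]
      exact types_congr_hom (NatTrans.congr_app hg (op ⦋(x.1 : ℕ)⦌)) x.2
    obtain ⟨k, f, g, hfg⟩ :=
      (Types.FilteredColimit.isColimit_eq_iff _
        (evalColim (op (SimplexCategory.mk (x.1 : ℕ))))).mp e1
    have hfg' : (F.map f).app _ ((F.map t).app _ (g₁.app _ x.2))
        = (F.map g).app _ ((F.map s).app _ (g₂.app _ x.2)) := hfg
    refine ⟨_, f ≫ IsFiltered.coeqHom f g, ?_⟩
    simp only [hQdef]
    calc (F.map (t ≫ (f ≫ IsFiltered.coeqHom f g))).app _ (g₁.app _ x.2)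
        = (F.map (IsFiltered.coeqHom f g)).app _
            ((F.map f).app _ ((F.map t).app _ (g₁.app _ x.2))) := by
          rw [← Category.assoc, F.map_comp, F.map_comp]; rfl
      _ = (F.map (IsFiltered.coeqHom f g)).app _
            ((F.map g).app _ ((F.map s).app _ (g₂.app _ x.2))) := by rw [hfg']
      _ = (F.map (s ≫ (g ≫ IsFiltered.coeqHom f g))).app _ (g₂.app _ x.2) := by
          rw [← Category.assoc, F.map_comp, F.map_comp]; rfl
      _ = (F.map (s ≫ (f ≫ IsFiltered.coeqHom f g))).app _ (g₂.app _ x.2) := by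
          rw [← IsFiltered.coeq_condition]
  obtain ⟨j', u, hu⟩ := exists_hom_all _ Q stable each
  refine ⟨j', t ≫ u, s ≫ u, horn_hom_ext_low ?_⟩
  intro b hb β
  have hx := hu ⟨⟨b.len, Nat.lt_succ_of_le hb⟩, β⟩
  simp only [hQdef] at hx
  exact hx

end Compact2

section LimitsAlgKan

variable {J : Type} [Category.{0} J] (K : J ⥤ AlgKan)

/-- The algebraic Kan structure on the limit of underlying simplicial sets. -/
noncomputable def limitAlgKan (c : Cone (K ⋙ UA)) (hc : IsLimit c) : AlgKan where
  carrier := c.pt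
  filler := fun n i hn h => hc.lift
    { pt := Δ[n]
      π :=
        { app := fun j => (K.obj j).filler i hn (h ≫ c.π.app j)
          naturality := fun j j' u => by
            have wu : c.π.app j ≫ (K.map u).map = c.π.app j' := c.w u
            show 𝟙 Δ[n] ≫ (K.obj j').filler i hn (h ≫ c.π.app j')
              = (K.obj j).filler i hn (h ≫ c.π.app j) ≫ (K.map u).map
            rw [Category.id_comp, (K.map u).preserves i hn (h ≫ c.π.app j)]
            erw [Category.assoc, wu] } }
  filler_spec := fun n i hn h => hc.hom_ext fun j => by
    rw [Category.assoc, hc.fac]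
    exact ((K.obj j).filler_spec i hn (h ≫ c.π.app j)).symm ▸ rfl

lemma limitAlgKan_filler_fac (c : Cone (K ⋙ UA)) (hc : IsLimit c) {n : ℕ}
    (i : Fin (n + 1)) (hn : 1 ≤ n) (h : (Λ[n, i] : SSet) ⟶ c.pt) (j : J) :
    (limitAlgKan K c hc).filler i hn h ≫ c.π.app j
      = (K.obj j).filler i hn (h ≫ c.π.app j) :=
  hc.fac _ j

/-- `UA` creates limits. -/
noncomputable def createsLimitUA : CreatesLimit K UA where
  reflects := fun {t} ht => ⟨{
    lift := fun s =>
      { map := ht.lift (UA.mapCone s)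
        preserves := fun n i hn h => ht.hom_ext fun j => by
          have fj : ht.lift (UA.mapCone s) ≫ (t.π.app j).map = (s.π.app j).map :=
            ht.fac (UA.mapCone s) j
          show (s.pt.filler i hn h ≫ ht.lift (UA.mapCone s)) ≫ (t.π.app j).map
            = (t.pt.filler i hn (h ≫ ht.lift (UA.mapCone s))) ≫ (t.π.app j).map
          calc (s.pt.filler i hn h ≫ ht.lift (UA.mapCone s)) ≫ (t.π.app j).map
              = s.pt.filler i hn h ≫ (s.π.app j).map := by erw [Category.assoc, fj]
            _ = (K.obj j).filler i hn (h ≫ (s.π.app j).map) := (s.π.app j).preserves i hn h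
            _ = (K.obj j).filler i hn ((h ≫ ht.lift (UA.mapCone s)) ≫ (t.π.app j).map) := by
                erw [Category.assoc, fj]
            _ = t.pt.filler i hn (h ≫ ht.lift (UA.mapCone s)) ≫ (t.π.app j).map :=
                ((t.π.app j).preserves i hn _).symm }
    fac := fun s j => AlgKan.Hom.ext (ht.fac (UA.mapCone s) j)
    uniq := fun s m w => AlgKan.Hom.ext
      (ht.uniq (UA.mapCone s) m.map fun j => congrArg AlgKan.Hom.map (w j)) }⟩
  lifts := fun c hc =>
    { liftedCone :=
        { pt := limitAlgKan K c hc
          π :=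
            { app := fun j =>
                { map := c.π.app j
                  preserves := fun n i hn h => limitAlgKan_filler_fac K c hc i hn h j }
              naturality := fun j j' u => AlgKan.Hom.ext (by
                have := c.π.naturality u
                dsimp only [Functor.const_obj_obj, Functor.const_obj_map] at this ⊢
                exact this) } }
      validLift := Cones.ext (Iso.refl _) }

end LimitsAlgKan

section ColimitsAlgKan

variable {J : Type} [SmallCategory J] [IsFiltered J] (K : J ⥤ AlgKan)

/-- The algebraic Kan structure on a filtered colimit of underlying simplicial sets. -/
noncomputable def colimitAlgKan (c : Cocone (K ⋙ UA)) (hc : IsColimit c) : AlgKan where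
  carrier := c.pt
  filler := fun n i hn h =>
    (K.obj (horn_hom_factor hc h).choose).filler i hn
        (horn_hom_factor hc h).choose_spec.choose
      ≫ c.ι.app (horn_hom_factor hc h).choose
  filler_spec := fun n i hn h => by
    erw [← Category.assoc]
    have hs := (K.obj (horn_hom_factor hc h).choose).filler_spec i hn
      (horn_hom_factor hc h).choose_spec.choose
    rw [hs]
    exact (horn_hom_factor hc h).choose_spec.choose_spec

lemma colimitAlgKan_filler_eq (c : Cocone (K ⋙ UA)) (hc : IsColimit c) {n : ℕ}
    (i : Fin (n + 1)) (hn : 1 ≤ n) (h : (Λ[n, i] : SSet) ⟶ c.pt) (j' : J)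
    (g' : (Λ[n, i] : SSet) ⟶ (K.obj j').carrier) (hg' : g' ≫ c.ι.app j' = h) :
    (K.obj j').filler i hn g' ≫ c.ι.app j' = (colimitAlgKan K c hc).filler i hn h := by
  obtain ⟨j'', u, v, huv⟩ := horn_hom_eq_stage hc
    (horn_hom_factor hc h).choose_spec.choose g'
    ((horn_hom_factor hc h).choose_spec.choose_spec.trans hg'.symm)
  have huv' : (horn_hom_factor hc h).choose_spec.choose ≫ (K.map u).map
      = g' ≫ (K.map v).map := huv
  have wu : (K.map u).map ≫ c.ι.app j'' = c.ι.app (horn_hom_factor hc h).choose := c.w u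
  have wv : (K.map v).map ≫ c.ι.app j'' = c.ι.app j' := c.w v
  calc (K.obj j').filler i hn g' ≫ c.ι.app j'
      = (K.obj j').filler i hn g' ≫ (K.map v).map ≫ c.ι.app j'' := by rw [wv]
    _ = ((K.obj j').filler i hn g' ≫ (K.map v).map) ≫ c.ι.app j'' := by
        erw [Category.assoc]
    _ = (K.obj j'').filler i hn (g' ≫ (K.map v).map) ≫ c.ι.app j'' := by
        rw [(K.map v).preserves i hn g']
    _ = (K.obj j'').filler i hn ((horn_hom_factor hc h).choose_spec.choose
          ≫ (K.map u).map) ≫ c.ι.app j'' := by rw [← huv']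
    _ = ((K.obj (horn_hom_factor hc h).choose).filler i hn
          (horn_hom_factor hc h).choose_spec.choose ≫ (K.map u).map) ≫ c.ι.app j'' := by
        erw [(K.map u).preserves i hn]
        rfl
    _ = (K.obj (horn_hom_factor hc h).choose).filler i hn
          (horn_hom_factor hc h).choose_spec.choose
          ≫ c.ι.app (horn_hom_factor hc h).choose := by erw [Category.assoc, wu]
    _ = (show Δ[n] ⟶ c.pt from (colimitAlgKan K c hc).filler i hn h) := rfl

/-- `UA` creates filtered colimits. -/
noncomputable def createsColimitUA : CreatesColimit K UA where
  reflects := fun {t} ht => ⟨{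
    desc := fun s =>
      { map := ht.desc (UA.mapCocone s)
        preserves := fun n i hn h => by
          obtain ⟨j, g, hg⟩ := horn_hom_factor (c := UA.mapCocone t) ht h
          have hg' : g ≫ (t.ι.app j).map = h := hg
          have fj : (t.ι.app j).map ≫ ht.desc (UA.mapCocone s) = (s.ι.app j).map :=
            ht.fac (UA.mapCocone s) j
          calc (show Δ[n] ⟶ s.pt.carrier from t.pt.filler i hn h ≫ ht.desc (UA.mapCocone s))
              = (show Δ[n] ⟶ s.pt.carrier from
                  t.pt.filler i hn (g ≫ (t.ι.app j).map) ≫ ht.desc (UA.mapCocone s)) := by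
                rw [hg']
            _ = (show Δ[n] ⟶ s.pt.carrier from
                  ((K.obj j).filler i hn g ≫ (t.ι.app j).map) ≫ ht.desc (UA.mapCocone s)) :=
                congrArg (fun q => q ≫ ht.desc (UA.mapCocone s))
                  ((t.ι.app j).preserves i hn g).symm
            _ = (K.obj j).filler i hn g ≫ (s.ι.app j).map := by
                erw [Category.assoc, fj]
            _ = s.pt.filler i hn (g ≫ (s.ι.app j).map) := (s.ι.app j).preserves i hn g
            _ = s.pt.filler i hn (g ≫ (t.ι.app j).map ≫ ht.desc (UA.mapCocone s)) := by
                erw [fj]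
            _ = s.pt.filler i hn (h ≫ ht.desc (UA.mapCocone s)) := by
                erw [← Category.assoc, hg'] }
    fac := fun s j => AlgKan.Hom.ext (ht.fac (UA.mapCocone s) j)
    uniq := fun s m w => AlgKan.Hom.ext
      (ht.uniq (UA.mapCocone s) m.map fun j => congrArg AlgKan.Hom.map (w j)) }⟩
  lifts := fun c hc =>
    { liftedCocone :=
        { pt := colimitAlgKan K c hc
          ι :=
            { app := fun j =>
                { map := c.ι.app j
                  preserves := fun n i hn g =>
                    colimitAlgKan_filler_eq K c hc i hn (g ≫ c.ι.app j) j g rfl }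
              naturality := fun j j' u => AlgKan.Hom.ext (by
                have := c.ι.naturality u
                dsimp only [Functor.const_obj_obj, Functor.const_obj_map] at this ⊢
                exact this) } }
      validLift := Cocones.ext (Iso.refl _) }

end ColimitsAlgKan

/-- `AlgKan` has all small limits and all filtered colimits, and the
forgetful functor `U_A` creates (in particular preserves) them. -/
theorem UA_creates_limits_and_filtered_colimits :
    HasLimitsOfSize.{0, 0} AlgKan ∧
    (∀ (J : Type) [SmallCategory J], IsFiltered J → HasColimitsOfShape J AlgKan) ∧
    Nonempty (CreatesLimitsOfSize.{0, 0} UA) ∧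
    (∀ (J : Type) [SmallCategory J], IsFiltered J →
      Nonempty (CreatesColimitsOfShape J UA)) ∧
    Nonempty (PreservesLimitsOfSize.{0, 0} UA) ∧
    (∀ (J : Type) [SmallCategory J], IsFiltered J →
      Nonempty (PreservesColimitsOfShape J UA)) := by
  have hasL : HasLimitsOfSize.{0, 0} AlgKan := by
    constructor
    intro J hJ
    constructor
    intro K
    haveI : CreatesLimit K UA := createsLimitUA K
    exact hasLimit_of_created K UA
  refine ⟨hasL, ?_, ⟨⟨fun {J} _ => ⟨fun {K} => createsLimitUA K⟩⟩⟩, ?_, ?_, ?_⟩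
  · intro J _ hJ
    haveI := hJ
    constructor
    intro K
    haveI : CreatesColimit K UA := createsColimitUA K
    exact hasColimit_of_created K UA
  · intro J _ hJ
    haveI := hJ
    exact ⟨⟨fun {K} => createsColimitUA K⟩⟩
  · refine ⟨⟨fun {J} _ => ?_⟩⟩
    haveI : CreatesLimitsOfShape J UA := ⟨fun {K} => createsLimitUA K⟩
    exact preservesLimitOfShape_of_createsLimitsOfShape_and_hasLimitsOfShape UA
  · intro J _ hJ
    haveI := hJ
    haveI : CreatesColimitsOfShape J UA := ⟨fun {K} => createsColimitUA K⟩
    exact ⟨preservesColimitOfShape_of_createsColimitsOfShape_and_hasColimitsOfShape UA⟩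

end AlgebraicModels
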